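/- For the path on 5 vertices and on 6 vertices, the d₂-transitivity equals 4: Tr_{d₂}(P₅) = Tr_{d₂}(P₆) = 4. -/

import Mathlib

open SimpleGraph

/-- `P : Fin k → Set V` is a d₂-transitive partition of size `k` of the graph `G`:
its parts are nonempty, every vertex lies in exactly one part, and for `i < j`
every vertex of `P j` is within graph distance 2 of some vertex of `P i`. -/
def IsD2TransPartition {V : Type*} (G : SimpleGraph V) {k : ℕ} (P : Fin k → Set V) : Prop :=
  (∀ i, (P i).Nonempty) ∧ (∀ v : V, ∃! i, v ∈ P i) ∧
  ∀ i j : Fin k, i < j → ∀ b ∈ P j, ∃ a ∈ P i, G.edist a b ≤ 2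

/-- The d₂-transitivity `Tr_{d₂}(G)`: the maximum size of a d₂-transitive partition. -/
noncomputable def Trd2 {V : Type*} (G : SimpleGraph V) : ℕ :=
  sSup {k : ℕ | ∃ P : Fin k → Set V, IsD2TransPartition G P}

lemma walk_bound {n : ℕ} {a b : Fin n} (p : (pathGraph n).Walk a b) :
    b.val ≤ a.val + p.length ∧ a.val ≤ b.val + p.length := by
  induction p with
  | nil => simp
  | cons h p ih =>
    rw [pathGraph_adj] at h
    simp only [SimpleGraph.Walk.length_cons]
    omega

lemma edist_le_two_iff {n : ℕ} {a b : Fin n} :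
    (pathGraph n).edist a b ≤ 2 ↔ b.val ≤ a.val + 2 ∧ a.val ≤ b.val + 2 := by
  constructor
  · intro h
    have hne : (pathGraph n).edist a b ≠ ⊤ := by
      intro ht; rw [ht] at h; exact absurd h (by simp)
    obtain ⟨p, hp⟩ := SimpleGraph.exists_walk_of_edist_ne_top hne
    have hl : (p.length : ℕ∞) ≤ 2 := hp ▸ h
    have hl2 : p.length ≤ 2 := by exact_mod_cast hl
    have := walk_bound p
    omega
  · intro ⟨h1, h2⟩
    rcases Nat.lt_or_ge a.val b.val with hlt | hge
    · rcases Nat.eq_or_lt_of_le (Nat.succ_le_of_lt hlt) with heq | hlt2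
      · have hadj : (pathGraph n).Adj a b := pathGraph_adj.mpr (Or.inl heq)
        calc (pathGraph n).edist a b ≤ 1 := le_of_eq (edist_eq_one_iff_adj.mpr hadj)
        _ ≤ 2 := by norm_num
      · have hb : b.val = a.val + 2 := by omega
        have hm : a.val + 1 < n := by omega
        set m : Fin n := ⟨a.val + 1, hm⟩ with hmdef
        have g1 : (pathGraph n).Adj a m := pathGraph_adj.mpr (Or.inl rfl)
        have g2 : (pathGraph n).Adj m b := pathGraph_adj.mpr (Or.inl (by simp [hmdef, hb]))
        calc (pathGraph n).edist a b ≤ (pathGraph n).edist a m + (pathGraph n).edist m b :=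
              SimpleGraph.edist_triangle
        _ ≤ 1 + 1 := add_le_add (le_of_eq (edist_eq_one_iff_adj.mpr g1))
              (le_of_eq (edist_eq_one_iff_adj.mpr g2))
        _ = 2 := by norm_num
    · rcases Nat.eq_or_lt_of_le hge with heq | hlt
      · have : a = b := Fin.ext heq.symm
        subst this; simp
      · rw [SimpleGraph.edist_comm]
        rcases Nat.eq_or_lt_of_le (Nat.succ_le_of_lt hlt) with heq | hlt2
        · have hadj : (pathGraph n).Adj b a := pathGraph_adj.mpr (Or.inl heq)
          calc (pathGraph n).edist b a ≤ 1 := le_of_eq (edist_eq_one_iff_adj.mpr hadj)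
          _ ≤ 2 := by norm_num
        · have ha : a.val = b.val + 2 := by omega
          have hm : b.val + 1 < n := by omega
          set m : Fin n := ⟨b.val + 1, hm⟩ with hmdef
          have g1 : (pathGraph n).Adj b m := pathGraph_adj.mpr (Or.inl rfl)
          have g2 : (pathGraph n).Adj m a := pathGraph_adj.mpr (Or.inl (by simp [hmdef, ha]))
          calc (pathGraph n).edist b a ≤ (pathGraph n).edist b m + (pathGraph n).edist m a :=
                SimpleGraph.edist_triangle
          _ ≤ 1 + 1 := add_le_add (le_of_eq (edist_eq_one_iff_adj.mpr g1))
                (le_of_eq (edist_eq_one_iff_adj.mpr g2))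
          _ = 2 := by norm_num

def FnCond (n k : ℕ) (f : Fin n → Fin k) : Prop :=
  Function.Surjective f ∧ ∀ v w : Fin n, f v < f w →
    ∃ a : Fin n, f a = f v ∧ w.val ≤ a.val + 2 ∧ a.val ≤ w.val + 2

instance (n k : ℕ) (f : Fin n → Fin k) : Decidable (FnCond n k f) := by
  unfold FnCond; infer_instance

lemma bridge (n k : ℕ) :
    (∃ P : Fin k → Set (Fin n), IsD2TransPartition (pathGraph n) P) ↔
    ∃ f : Fin n → Fin k, FnCond n k f := by
  constructor
  · rintro ⟨P, hne, huniq, hcond⟩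
    choose f hf hfu using huniq
    refine ⟨f, ?_, ?_⟩
    · intro i
      obtain ⟨v, hv⟩ := hne i
      exact ⟨v, (hfu v i hv).symm ▸ rfl⟩
    · intro v w hlt
      obtain ⟨a, ha, hd⟩ := hcond (f v) (f w) hlt w (hf w)
      rw [edist_le_two_iff] at hd
      exact ⟨a, (hfu a (f v) ha).symm, by omega⟩
  · rintro ⟨f, hsurj, hcond⟩
    refine ⟨fun i => {v | f v = i}, ?_, ?_, ?_⟩
    · intro i; obtain ⟨v, hv⟩ := hsurj i; exact ⟨v, hv⟩
    · intro v; exact ⟨f v, rfl, fun j hj => hj.symm⟩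
    · rintro i j hij b hb
      obtain ⟨v, hv⟩ := hsurj i
      obtain ⟨a, ha, hd⟩ := hcond v b (by rw [hv, hb]; exact hij)
      refine ⟨a, by rw [Set.mem_setOf_eq, ha, hv], ?_⟩
      rw [edist_le_two_iff]; omega

lemma down {n k : ℕ} (f : Fin n → Fin (k + 2)) (hf : FnCond n (k + 2) f) :
    ∃ g : Fin n → Fin (k + 1), FnCond n (k + 1) g := by
  refine ⟨fun v => ⟨min (f v).val k, by omega⟩, ?_, ?_⟩
  · intro i
    obtain ⟨v, hv⟩ := hf.1 ⟨i.val, by omega⟩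
    exact ⟨v, by ext; simp [hv]; omega⟩
  · intro v w hlt
    simp only [Fin.lt_def] at hlt
    have hvw : f v < f w := by simp at hlt; exact Fin.lt_def.mpr (by omega)
    obtain ⟨a, ha, hd⟩ := hf.2 v w hvw
    exact ⟨a, by ext; simp [ha], hd⟩

lemma down' {n : ℕ} : ∀ k, (∃ f : Fin n → Fin (k + 5), FnCond n (k + 5) f) →
    ∃ g : Fin n → Fin 5, FnCond n 5 g := by
  intro k
  induction k with
  | zero => exact id
  | succ m ih => rintro ⟨f, hf⟩; exact ih (down (k := m + 4) f hf)

def okP (l : List ℕ) : Prop :=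
  (∀ i < 5, i ∈ l) ∧ ∀ v < l.length, ∀ w < l.length, l.getD v 0 < l.getD w 0 →
    ∃ a < l.length, l.getD a 0 = l.getD v 0 ∧ w ≤ a + 2 ∧ a ≤ w + 2

def okB (l : List ℕ) : Bool :=
  ((List.range 5).all fun i => l.contains i) &&
  ((List.range l.length).all fun v => (List.range l.length).all fun w =>
    !decide (l.getD v 0 < l.getD w 0) ||
      ((List.range l.length).any fun a =>
        (l.getD a 0 == l.getD v 0) && decide (w ≤ a + 2) && decide (a ≤ w + 2)))

lemma okB_iff (l : List ℕ) : okB l = true ↔ okP l := by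
  unfold okB okP
  simp only [Bool.and_eq_true, List.all_eq_true, List.mem_range, List.any_eq_true,
    Bool.or_eq_true, Bool.not_eq_true', beq_iff_eq, decide_eq_true_eq, List.contains,
    List.elem_iff, decide_eq_false_iff_not]
  constructor
  · rintro ⟨h1, h2⟩
    refine ⟨h1, fun v hv w hw hlt => ?_⟩
    obtain ⟨a, ha, hc⟩ := (h2 v hv w hw).resolve_left (not_not_intro hlt)
    exact ⟨a, ha, hc.1.1, hc.1.2, hc.2⟩
  · rintro ⟨h1, h2⟩
    refine ⟨h1, fun v hv w hw => ?_⟩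
    by_cases hlt : l.getD v 0 < l.getD w 0
    · obtain ⟨a, ha, g1, g2, g3⟩ := h2 v hv w hw hlt
      exact Or.inr ⟨a, ha, ⟨g1, g2⟩, g3⟩
    · exact Or.inl hlt

def srch : ℕ → List ℕ → Bool
  | 0, l => okB l
  | m+1, l =>
    decide (((List.range 5).countP fun i => !(l.contains i)) ≤ m + 1) &&
    ((List.range 5).any fun x => srch m (l ++ [x]))

lemma srch_false : ∀ (m : ℕ) (l : List ℕ), srch m l = false →
    ∀ suf : List ℕ, suf.length = m → (∀ x ∈ suf, x < 5) → ¬ okP (l ++ suf) := by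
  intro m
  induction m with
  | zero =>
    intro l h suf hlen _
    rw [List.length_eq_zero_iff] at hlen; subst hlen
    rw [srch] at h
    simpa [← okB_iff] using h
  | succ k ih =>
    intro l h suf hlen hmem hok
    match suf with
    | x :: suf' =>
      have hx : x < 5 := hmem x (by simp)
      rw [srch, Bool.and_eq_false_iff] at h
      rcases h with h | h
      · rw [decide_eq_false_iff_not, not_le] at h
        set F := (List.range 5).filter (fun i => !(l.contains i)) with hF
        have hsub : F ⊆ x :: suf' := by
          intro i hi
          simp only [hF, List.mem_filter, List.mem_range, Bool.not_eq_true',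
            List.contains, List.elem_eq_mem, decide_eq_false_iff_not] at hi
          have := hok.1 i hi.1
          rcases List.mem_append.mp this with h' | h'
          · exact absurd h' hi.2
          · exact h'
        have hnd : F.Nodup := (List.nodup_range (n := 5)).filter _
        have hle : F.length ≤ (x :: suf').length :=
          (List.subperm_of_subset hnd hsub).length_le
        rw [List.countP_eq_length_filter, ← hF] at h
        rw [hlen] at hle
        omega
      · rw [List.any_eq_false] at h
        have h5 : srch k (l ++ [x]) = false := by
          simpa using h x (List.mem_range.mpr hx)
        exact ih (l ++ [x]) h5 suf' (by simpa using hlen)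
          (fun y hy => hmem y (by simp [hy])) (by simpa using hok)

set_option maxHeartbeats 4000000 in
set_option maxRecDepth 100000 in
lemma s5 : srch 5 [] = false := by decide

set_option maxHeartbeats 8000000 in
set_option maxRecDepth 100000 in
lemma s6 : srch 6 [] = false := by decide

lemma no5 (n : ℕ) (hn : n = 5 ∨ n = 6) : ¬ ∃ f : Fin n → Fin 5, FnCond n 5 f := by
  rintro ⟨f, hsurj, hcond⟩
  set L : List ℕ := List.ofFn (fun i => (f i).val) with hL
  have hlen : L.length = n := by simp [hL]
  have hget : ∀ v (h : v < n), L.getD v 0 = (f ⟨v, h⟩).val := by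
    intro v h
    simp [hL, List.getD_eq_getElem?_getD, List.getElem?_ofFn, h]
  have hmem : ∀ x ∈ L, x < 5 := by
    intro x hx
    rw [hL, List.mem_ofFn] at hx
    obtain ⟨i, rfl⟩ := hx
    exact (f i).isLt
  have hok : okP L := by
    constructor
    · intro i hi
      obtain ⟨a, ha⟩ := hsurj ⟨i, hi⟩
      rw [hL, List.mem_ofFn]
      exact ⟨a, by simp [ha]⟩
    · intro v hv w hw hlt
      rw [hlen] at hv hw
      rw [hget v hv, hget w hw] at hlt
      obtain ⟨a, ha, h1, h2⟩ := hcond ⟨v, hv⟩ ⟨w, hw⟩ (Fin.lt_def.mpr hlt)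
      refine ⟨a.val, by rw [hlen]; exact a.isLt, ?_, h1, h2⟩
      rw [hget a.val a.isLt, hget v hv, Fin.eta, ha]
  have hs : srch n [] = false := by
    rcases hn with h | h <;> subst h
    · exact s5
    · exact s6
  exact srch_false n [] hs L hlen hmem (by simpa using hok)

lemma trd2_eq (n : ℕ) (hn : n = 5 ∨ n = 6) : Trd2 (pathGraph n) = 4 := by
  have h4 : 4 ∈ {k : ℕ | ∃ P : Fin k → Set (Fin n), IsD2TransPartition (pathGraph n) P} := by
    rw [Set.mem_setOf_eq, bridge]
    rcases hn with h | h <;> subst h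
    · exact ⟨![0, 1, 3, 2, 0], by decide⟩
    · exact ⟨![0, 1, 2, 3, 1, 0], by decide⟩
  have hub : ∀ k ∈ {k : ℕ | ∃ P : Fin k → Set (Fin n), IsD2TransPartition (pathGraph n) P},
      k ≤ 4 := by
    intro k hk
    rw [Set.mem_setOf_eq, bridge] at hk
    obtain ⟨f, hf⟩ := hk
    by_contra hgt
    push_neg at hgt
    obtain ⟨m, rfl⟩ : ∃ m, k = m + 5 := ⟨k - 5, by omega⟩
    exact no5 n hn (down' m ⟨f, hf⟩)
  exact le_antisymm (csSup_le ⟨4, h4⟩ hub) (le_csSup ⟨4, hub⟩ h4)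

theorem stmt_18 : Trd2 (pathGraph 5) = 4 ∧ Trd2 (pathGraph 6) = 4 := by
  exact ⟨trd2_eq 5 (Or.inl rfl), trd2_eq 6 (Or.inr rfl)⟩
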